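/- Let f₁, f₂ : ℝ → ℝ have Bernstein expansions of common degree k with coefficients b_α^{(f₁)} and b_α^{(f₂)}, where all b_α^{(f₂)} > 0. Then for all x ∈ [0,1] with f₂(x) > 0, one has min_{α ≤ k} (b_α^{(f₁)} / b_α^{(f₂)}) ≤ f₁(x)/f₂(x) ≤ max_{α ≤ k} (b_α^{(f₁)} / b_α^{(f₂)}). -/
import Mathlib


/-- Univariate Bernstein basis polynomial of degree `k`. -/
noncomputable def bern (k α : ℕ) (x : ℝ) : ℝ :=
  (k.choose α : ℝ) * x ^ α * (1 - x) ^ (k - α)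

lemma bern_nonneg (k α : ℕ) {x : ℝ} (hx : x ∈ Set.Icc (0 : ℝ) 1) :
    0 ≤ bern k α x := by
  obtain ⟨h0, h1⟩ := hx
  unfold bern
  have : (0:ℝ) ≤ 1 - x := by linarith
  positivity

theorem stmt_4 (k : ℕ) (f₁ f₂ : ℝ → ℝ) (b₁ b₂ : Fin (k + 1) → ℝ)
    (hf₁ : ∀ x, f₁ x = ∑ α : Fin (k + 1), b₁ α * bern k (α : ℕ) x)
    (hf₂ : ∀ x, f₂ x = ∑ α : Fin (k + 1), b₂ α * bern k (α : ℕ) x)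
    (hb₂ : ∀ α, 0 < b₂ α)
    (x : ℝ) (hx : x ∈ Set.Icc (0 : ℝ) 1) (hf₂x : 0 < f₂ x) :
    Finset.univ.inf' Finset.univ_nonempty (fun α => b₁ α / b₂ α) ≤ f₁ x / f₂ x ∧
    f₁ x / f₂ x ≤ Finset.univ.sup' Finset.univ_nonempty (fun α => b₁ α / b₂ α) := by
  set m := Finset.univ.inf' Finset.univ_nonempty (fun α => b₁ α / b₂ α) with hm
  set M := Finset.univ.sup' Finset.univ_nonempty (fun α => b₁ α / b₂ α) with hM
  constructor
  · rw [le_div_iff₀ hf₂x, hf₁ x, hf₂ x, Finset.mul_sum]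
    apply Finset.sum_le_sum
    intro α _
    have h1 : m ≤ b₁ α / b₂ α := Finset.inf'_le _ (Finset.mem_univ α)
    have h2 : m * b₂ α ≤ b₁ α := by
      rw [le_div_iff₀ (hb₂ α)] at h1; linarith
    have := bern_nonneg k (α : ℕ) hx
    nlinarith
  · rw [div_le_iff₀ hf₂x, hf₁ x, hf₂ x, Finset.mul_sum]
    apply Finset.sum_le_sum
    intro α _
    have h1 : b₁ α / b₂ α ≤ M := Finset.le_sup' (fun α => b₁ α / b₂ α) (Finset.mem_univ α)
    have h2 : b₁ α ≤ M * b₂ α := by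
      rw [div_le_iff₀ (hb₂ α)] at h1; linarith
    have := bern_nonneg k (α : ℕ) hx
    nlinarith
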